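/- Let G be a minimal non flat path extendable (MNFPE) graph and let P be a witness path for G. Then every nearly simplicial vertex of G lies in N[P]. -/

import Mathlib

open Classical

universe u

/-- `IsHoleOn G n H`: `H` is the vertex set of an induced cycle of `G` of length `n ≥ 4`. -/
def IsHoleOn {V : Type u} (G : SimpleGraph V) (n : ℕ) (H : Set V) : Prop :=
  4 ≤ n ∧ ∃ f : ZMod n → V, Function.Injective f ∧ Set.range f = H ∧
    ∀ i j : ZMod n, G.Adj (f i) (f j) ↔ (j = i + 1 ∨ i = j + 1)

/-- A hole: an induced cycle of length at least 4. -/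
def IsHole {V : Type u} (G : SimpleGraph V) (H : Set V) : Prop :=
  ∃ n : ℕ, IsHoleOn G n H

/-- No induced cycle of even length. -/
def EvenHoleFree {V : Type u} (G : SimpleGraph V) : Prop :=
  ∀ (n : ℕ) (H : Set V), IsHoleOn G n H → ¬ Even n

/-- `G[X]` is chordal: no hole of `G` is contained in `X`. -/
def ChordalSet {V : Type u} (G : SimpleGraph V) (X : Set V) : Prop :=
  ∀ H : Set V, H ⊆ X → ¬ IsHole G H

/-- A wheel `(H, w)`: a hole `H` and `w ∉ H` with at least 3 neighbors in `H`. -/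
def IsWheel {V : Type u} (G : SimpleGraph V) (H : Set V) (w : V) : Prop :=
  IsHole G H ∧ w ∉ H ∧ 3 ≤ (H ∩ {u | G.Adj w u}).ncard

/-- An induced path of `G`, recorded as the list of its vertices in order. -/
def IsInducedPathList {V : Type u} (G : SimpleGraph V) (l : List V) : Prop :=
  l ≠ [] ∧ l.Nodup ∧
    ∀ (i j : ℕ) (hi : i < l.length) (hj : j < l.length),
      G.Adj (l.get ⟨i, hi⟩) (l.get ⟨j, hj⟩) ↔ (i + 1 = j ∨ j + 1 = i)

/-- A vertex set that induces a path. -/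
def InducesPath {V : Type u} (G : SimpleGraph V) (S : Set V) : Prop :=
  ∃ l : List V, IsInducedPathList G l ∧ {v | v ∈ l} = S

/-- A sector wheel: a wheel `(H, w)` where `w` is complete to `H` or
`N(w) ∩ H` induces a path. -/
def IsSectorWheel {V : Type u} (G : SimpleGraph V) (H : Set V) (w : V) : Prop :=
  IsWheel G H w ∧
    ((∀ u ∈ H, G.Adj w u) ∨ InducesPath G (H ∩ {u | G.Adj w u}))

/-- A twin wheel: a wheel `(H, w)` where `N(w) ∩ H` induces a three-vertex path. -/
def IsTwinWheel {V : Type u} (G : SimpleGraph V) (H : Set V) (w : V) : Prop :=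
  IsWheel G H w ∧ ∃ a b c : V, a ≠ b ∧ b ≠ c ∧ a ≠ c ∧
    H ∩ {u | G.Adj w u} = {a, b, c} ∧ G.Adj a b ∧ G.Adj b c ∧ ¬ G.Adj a c

/-- A short pyramid: a wheel `(H, w)` where `N(w) ∩ H` is an edge plus an isolated vertex. -/
def IsShortPyramid {V : Type u} (G : SimpleGraph V) (H : Set V) (w : V) : Prop :=
  IsWheel G H w ∧ ∃ a b c : V, a ≠ b ∧ b ≠ c ∧ a ≠ c ∧
    H ∩ {u | G.Adj w u} = {a, b, c} ∧ G.Adj a b ∧ ¬ G.Adj a c ∧ ¬ G.Adj b c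

/-- A flat path: an induced path all of whose interior vertices have degree 2 in `G`. -/
def IsFlatPath {V : Type u} (G : SimpleGraph V) (l : List V) : Prop :=
  IsInducedPathList G l ∧
    ∀ (i : ℕ) (hi : i < l.length), 0 < i → i + 1 < l.length →
      ({u | G.Adj (l.get ⟨i, hi⟩) u}).ncard = 2

/-- The closed neighborhood `N[S]` of a set of vertices. -/
def ClosedNbhd {V : Type u} (G : SimpleGraph V) (S : Set V) : Set V :=
  S ∪ {v | ∃ s ∈ S, G.Adj v s}

/-- `(W1, W2)` (a precover on a path with vertex set `S`) extends to a chordal cover of `G`. -/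
def ExtendsToCover {V : Type u} (G : SimpleGraph V) (S W1 W2 : Set V) : Prop :=
  ∃ X1 X2 : Set V, W1 ⊆ X1 ∧ W2 ⊆ X2 ∧ ChordalSet G X1 ∧ ChordalSet G X2 ∧
    X1 ∩ X2 = S ∧ X1 ∪ X2 = Set.univ

/-- Flat path extendable. -/
def FPE {V : Type u} (G : SimpleGraph V) : Prop :=
  ∀ l : List V, IsFlatPath G l →
    ∀ W1 W2 : Set V, ChordalSet G W1 → ChordalSet G W2 →
      W1 ∩ W2 = {v | v ∈ l} → W1 ∪ W2 = ClosedNbhd G {v | v ∈ l} →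
      ExtendsToCover G {v | v ∈ l} W1 W2

/-- Weakly flat path extendable: only paths with at most two vertices are considered. -/
def WeaklyFPE {V : Type u} (G : SimpleGraph V) : Prop :=
  ∀ l : List V, IsInducedPathList G l → l.length ≤ 2 →
    ∀ W1 W2 : Set V, ChordalSet G W1 → ChordalSet G W2 →
      W1 ∩ W2 = {v | v ∈ l} → W1 ∪ W2 = ClosedNbhd G {v | v ∈ l} →
      ExtendsToCover G {v | v ∈ l} W1 W2

/-- Minimal non flat path extendable. -/
def MNFPE {V : Type u} (G : SimpleGraph V) : Prop :=
  ¬ FPE G ∧ ∀ S : Set V, S ≠ Set.univ → FPE (G.induce S)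

/-- Minimal non-weakly flat path extendable. -/
def MinNonWeaklyFPE {V : Type u} (G : SimpleGraph V) : Prop :=
  ¬ WeaklyFPE G ∧ ∀ S : Set V, S ≠ Set.univ → WeaklyFPE (G.induce S)

/-- A witness path `l` with witness sets `W1, W2`: a precover on a flat path
admitting no extension to a chordal cover. -/
def WitnessPath {V : Type u} (G : SimpleGraph V) (l : List V) (W1 W2 : Set V) : Prop :=
  IsFlatPath G l ∧ ChordalSet G W1 ∧ ChordalSet G W2 ∧
    W1 ∩ W2 = {v | v ∈ l} ∧ W1 ∪ W2 = ClosedNbhd G {v | v ∈ l} ∧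
    ¬ ExtendsToCover G {v | v ∈ l} W1 W2

/-- A witness path of length zero or one with witness sets, for the weak notion. -/
def WeakWitness {V : Type u} (G : SimpleGraph V) (l : List V) (W1 W2 : Set V) : Prop :=
  IsInducedPathList G l ∧ l.length ≤ 2 ∧ ChordalSet G W1 ∧ ChordalSet G W2 ∧
    W1 ∩ W2 = {v | v ∈ l} ∧ W1 ∪ W2 = ClosedNbhd G {v | v ∈ l} ∧
    ¬ ExtendsToCover G {v | v ∈ l} W1 W2

/-- `N(v)` is the union of a clique and a singleton. -/
def NearlySimplicial {V : Type u} (G : SimpleGraph V) (v : V) : Prop :=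
  ∃ (K : Set V) (u : V), G.IsClique K ∧ {w | G.Adj v w} = K ∪ {u}

/-- `G` has a star cutset. -/
def HasStarCutset {V : Type u} (G : SimpleGraph V) : Prop :=
  G.Connected ∧ ∃ (v : V) (C : Set V), v ∈ C ∧ C ⊆ insert v {u | G.Adj v u} ∧
    ¬ (G.induce (Cᶜ : Set V)).Connected

/-- `v` is the center of a star cutset of `G`. -/
def IsStarCutsetCenter {V : Type u} (G : SimpleGraph V) (v : V) : Prop :=
  G.Connected ∧ ∃ C : Set V, v ∈ C ∧ C ⊆ insert v {u | G.Adj v u} ∧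
    ¬ (G.induce (Cᶜ : Set V)).Connected

/-- `G` has a full star cutset, i.e. a star cutset of the form `N[v]`. -/
def HasFullStarCutset {V : Type u} (G : SimpleGraph V) : Prop :=
  G.Connected ∧ ∃ v : V,
    ¬ (G.induce (((insert v {u | G.Adj v u}) : Set V)ᶜ)).Connected

/-- A clique cutset. -/
def IsCliqueCutset {V : Type u} (G : SimpleGraph V) (Q : Set V) : Prop :=
  G.IsClique Q ∧ ¬ (G.induce (Qᶜ : Set V)).Connected

/-- `C` is (the vertex set of) a connected component of `G[S]`. -/
def IsCompOf {V : Type u} (G : SimpleGraph V) (S C : Set V) : Prop :=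
  ∃ comp : (G.induce S).ConnectedComponent, C = Subtype.val '' comp.supp

/-- A marker path for the side `(A, C, B)` of a 2-join, with ends `a ∈ A` and `b ∈ B`
and interior in `C`. -/
def IsMarkerPath {V : Type u} (G : SimpleGraph V) (A C B : Set V) (a b : V)
    (l : List V) : Prop :=
  IsInducedPathList G l ∧ a ∈ A ∧ b ∈ B ∧
    ∃ m : List V, l = a :: (m ++ [b]) ∧ ∀ v ∈ m, v ∈ C

/-- A 2-join of `G`. -/
def IsTwoJoin {V : Type u} (G : SimpleGraph V) (A1 C1 B1 A2 C2 B2 : Set V) : Prop :=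
  ([A1, C1, B1, A2, C2, B2] : List (Set V)).Pairwise Disjoint ∧
  A1 ∪ C1 ∪ B1 ∪ A2 ∪ C2 ∪ B2 = Set.univ ∧
  (∀ a ∈ A1, ∀ b ∈ A2, G.Adj a b) ∧
  (∀ a ∈ B1, ∀ b ∈ B2, G.Adj a b) ∧
  (∀ u ∈ A1 ∪ C1 ∪ B1, ∀ v ∈ A2 ∪ C2 ∪ B2, G.Adj u v →
    ((u ∈ A1 ∧ v ∈ A2) ∨ (u ∈ B1 ∧ v ∈ B2))) ∧
  (∃ (a b : V) (l : List V), IsMarkerPath G A1 C1 B1 a b l ∧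
      A1 ∪ C1 ∪ B1 ≠ {v | v ∈ l}) ∧
  (∃ (a b : V) (l : List V), IsMarkerPath G A2 C2 B2 a b l ∧
      A2 ∪ C2 ∪ B2 ≠ {v | v ∈ l})

/-- A leaf of a graph: a vertex of degree one. -/
def IsLeaf {V : Type u} (T : SimpleGraph V) (v : V) : Prop :=
  ({u | T.Adj v u}).ncard = 1

/-- The graph `B(T)` built from a tree `T` whose bipartition is given by the proper
2-coloring `c`: vertices are the edges of `T` plus two extra vertices `x_false, x_true`
(encoded as `Bool`); two edges are adjacent iff they share an endpoint, `x_i` is adjacent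
to the pendant edge at each leaf on side `i`, and `x_false` is adjacent to `x_true`. -/
def BGraph {V : Type u} (T : SimpleGraph V) (c : V → Bool) :
    SimpleGraph (↥T.edgeSet ⊕ Bool) :=
  SimpleGraph.fromRel fun a b =>
    match a, b with
    | Sum.inl e, Sum.inl f => ∃ v : V, v ∈ e.val ∧ v ∈ f.val
    | Sum.inl e, Sum.inr i => ∃ v : V, IsLeaf T v ∧ c v = i ∧ v ∈ e.val
    | Sum.inr _, Sum.inl _ => False
    | Sum.inr _, Sum.inr _ => True
section AuxStmt3

variable {V : Type u} {G : SimpleGraph V}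

/-- Holes of an induced subgraph are holes of the big graph. -/
lemma aux_hole_down {S : Set V} {n : ℕ} {H' : Set ↥S}
    (h : IsHoleOn (G.induce S) n H') : IsHoleOn G n (Subtype.val '' H') := by
  obtain ⟨hn, f, hf, hr, ha⟩ := h
  refine ⟨hn, Subtype.val ∘ f, Subtype.val_injective.comp hf, ?_, fun i j => ha i j⟩
  rw [Set.range_comp, hr]

/-- Holes of `G` inside `S` lift to holes of `G.induce S`. -/
lemma aux_hole_up {S : Set V} {n : ℕ} {H : Set V} (hHS : H ⊆ S)
    (h : IsHoleOn G n H) :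
    ∃ H' : Set ↥S, Subtype.val '' H' = H ∧ IsHoleOn (G.induce S) n H' := by
  obtain ⟨hn, f, hf, hr, ha⟩ := h
  have hfS : ∀ i, f i ∈ S := fun i => hHS (hr ▸ Set.mem_range_self i)
  refine ⟨Set.range (fun i => (⟨f i, hfS i⟩ : ↥S)), ?_, hn,
    fun i => ⟨f i, hfS i⟩, ?_, rfl, fun i j => ha i j⟩
  · rw [← Set.range_comp]; exact hr
  · intro i j hij
    exact hf (congrArg Subtype.val hij)

lemma aux_chordal_down {S : Set V} {X' : Set ↥S} (h : ChordalSet (G.induce S) X') :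
    ChordalSet G (Subtype.val '' X') := by
  rintro H hH ⟨n, hn⟩
  have hHS : H ⊆ S := hH.trans (by rintro x ⟨y, _, rfl⟩; exact y.2)
  obtain ⟨H', hval, hn'⟩ := aux_hole_up hHS hn
  refine h H' ?_ ⟨n, hn'⟩
  intro x hx
  have : (x : V) ∈ Subtype.val '' X' := hH (hval ▸ ⟨x, hx, rfl⟩)
  obtain ⟨y, hy, hyx⟩ := this
  rwa [← Subtype.val_injective hyx]

lemma aux_chordal_preimage {S : Set V} {X : Set V} (h : ChordalSet G X) :
    ChordalSet (G.induce S) (Subtype.val ⁻¹' X) := by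
  rintro H' hH' ⟨n, hn⟩
  refine h (Subtype.val '' H') ?_ ⟨n, aux_hole_down hn⟩
  rintro x ⟨y, hy, rfl⟩
  exact hH' hy

/-- Adding a nearly simplicial vertex to a chordal set avoiding `u` keeps it chordal. -/
lemma aux_add_ns {X K : Set V} {v u : V} (hK : G.IsClique K)
    (hN : {w | G.Adj v w} = K ∪ {u}) (hu : u ∉ X) (hX : ChordalSet G X) :
    ChordalSet G (X ∪ {v}) := by
  rintro H hH ⟨n, hn4, f, hf, hr, ha⟩
  by_cases hvH : v ∈ H
  · obtain ⟨k, hk⟩ : ∃ k, f k = v := by rwa [← hr] at hvH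
    haveI : NeZero n := ⟨by omega⟩
    have h1 : G.Adj v (f (k + 1)) := hk ▸ (ha k (k + 1)).mpr (Or.inl rfl)
    have h2 : G.Adj v (f (k - 1)) := by
      have : G.Adj (f (k - 1)) (f k) := (ha (k - 1) k).mpr (Or.inl (by ring))
      exact hk ▸ this.symm
    have hne : f (k + 1) ≠ f (k - 1) := by
      intro h
      have h2' : ((2 : ℕ) : ZMod n) = 0 := by
        have := hf h
        push_cast
        linear_combination this
      rw [ZMod.natCast_eq_zero_iff] at h2'
      have := Nat.le_of_dvd (by norm_num) h2'
      omega
    have hnadj : ¬ G.Adj (f (k + 1)) (f (k - 1)) := by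
      rw [ha]
      rintro (h | h)
      · have h3' : ((3 : ℕ) : ZMod n) = 0 := by
          push_cast
          linear_combination -h
        rw [ZMod.natCast_eq_zero_iff] at h3'
        have := Nat.le_of_dvd (by norm_num) h3'
        omega
      · have h1' : ((1 : ℕ) : ZMod n) = 0 := by
          push_cast
          linear_combination h
        rw [ZMod.natCast_eq_zero_iff] at h1'
        have := Nat.le_of_dvd (by norm_num) h1'
        omega
    have hm1 : f (k + 1) ∈ K ∪ {u} := hN ▸ h1
    have hm2 : f (k - 1) ∈ K ∪ {u} := hN ▸ h2
    have huH : u ∈ H := by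
      rcases hm1 with hm1 | hm1
      · rcases hm2 with hm2 | hm2
        · exact absurd (hK hm1 hm2 hne) hnadj
        · rw [← hm2, ← hr]; exact Set.mem_range_self _
      · rw [← hm1, ← hr]; exact Set.mem_range_self _
    have huv : u ≠ v := by
      have : u ∈ {w | G.Adj v w} := hN ▸ (Set.mem_union_right _ rfl)
      exact (G.ne_of_adj this).symm
    rcases hH huH with h | h
    · exact hu h
    · exact huv h
  · refine hX H ?_ ⟨n, hn4, f, hf, hr, ha⟩
    intro x hx
    rcases hH hx with h | h
    · exact h
    · exact absurd (h ▸ hx) hvH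

lemma aux_ext_swap {L W1 W2 : Set V} (h : ExtendsToCover G L W2 W1) :
    ExtendsToCover G L W1 W2 := by
  obtain ⟨X1, X2, a, b, c, d, e, f⟩ := h
  exact ⟨X2, X1, b, a, d, c, by rwa [Set.inter_comm], by rwa [Set.union_comm]⟩

lemma aux_cover_with_v {L W1 W2 K Y1 Y2 : Set V} {v u : V}
    (hK : G.IsClique K) (hN : {w | G.Adj v w} = K ∪ {u})
    (h1 : W1 ⊆ Y1) (h2 : W2 ⊆ Y2) (c1 : ChordalSet G Y1) (c2 : ChordalSet G Y2)
    (hi : Y1 ∩ Y2 = L) (hun : Y1 ∪ Y2 = ({v}ᶜ : Set V)) (hu2 : u ∉ Y2) :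
    ExtendsToCover G L W1 W2 := by
  have hv1 : v ∉ Y1 := fun h => by
    have : v ∈ ({v}ᶜ : Set V) := hun ▸ Set.mem_union_left _ h
    exact this rfl
  refine ⟨Y1, Y2 ∪ {v}, h1, h2.trans Set.subset_union_left, c1,
    aux_add_ns hK hN hu2 c2, ?_, ?_⟩
  · rw [Set.inter_union_distrib_left, hi]
    have : Y1 ∩ {v} = ∅ := by
      ext x; simp only [Set.mem_inter_iff, Set.mem_singleton_iff, Set.mem_empty_iff_false,
        iff_false, not_and]
      rintro hx rfl; exact hv1 hx
    rw [this, Set.union_empty]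
  · rw [← Set.union_assoc, hun, Set.compl_union_self]

end AuxStmt3

/-- If `G` is MNFPE and `l` is a witness path for `G`, then every nearly simplicial
vertex of `G` lies in `N[l]`. -/
theorem stmt3 {V : Type u} [Finite V] (G : SimpleGraph V) (hG : MNFPE G)
    (l : List V) (W1 W2 : Set V) (hW : WitnessPath G l W1 W2)
    (v : V) (hv : NearlySimplicial G v) :
    v ∈ ClosedNbhd G {x | x ∈ l} := by
  by_contra hvP
  obtain ⟨K, u, hK, hNv⟩ := hv
  obtain ⟨hflat, hc1, hc2, hint, huni, hnoext⟩ := hW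
  set L : Set V := {x | x ∈ l} with hL
  set S : Set V := ({v}ᶜ : Set V) with hS
  -- basic facts about v and l
  have hvL : v ∉ L := fun h => hvP (Set.mem_union_left _ h)
  have hvAdj : ∀ x ∈ l, ¬ G.Adj v x := by
    intro x hx hadj
    exact hvP (Set.mem_union_right _ ⟨x, hx, hadj⟩)
  have hNS : ClosedNbhd G L ⊆ S := by
    intro x hx
    rintro (rfl : x = v)
    exact hvP hx
  have hLS : L ⊆ S := fun x hx => hNS (Set.mem_union_left _ hx)
  have hW1S : W1 ⊆ S := (huni ▸ Set.subset_union_left (s := W1) (t := W2)).trans hNS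
  have hW2S : W2 ⊆ S := (huni ▸ Set.subset_union_right (s := W1) (t := W2)).trans hNS
  -- the induced subgraph on S is FPE
  have hSne : S ≠ Set.univ := fun h => by
    have : v ∈ S := h ▸ Set.mem_univ v
    exact this rfl
  have hFPE : FPE (G.induce S) := hG.2 S hSne
  -- transfer the flat path
  have hlmem : ∀ x ∈ l, x ∈ S := fun x hx => hLS hx
  set l' : List ↥S := l.pmap (fun a ha => (⟨a, ha⟩ : ↥S)) hlmem with hl'
  have hlen : l'.length = l.length := List.length_pmap
  have hget : ∀ (i : ℕ) (hi : i < l'.length),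
      (l'.get ⟨i, hi⟩ : V) = l.get ⟨i, hlen ▸ hi⟩ := by
    intro i hi
    exact congrArg Subtype.val (List.getElem_pmap _ hlmem hi)
  have hmem' : ∀ x' : ↥S, x' ∈ l' ↔ (x' : V) ∈ l := by
    rintro ⟨x, hx⟩
    simp only [hl', List.mem_pmap]
    constructor
    · rintro ⟨a, ha, h⟩
      obtain rfl : a = x := congrArg Subtype.val h
      exact ha
    · intro h; exact ⟨x, h, rfl⟩
  obtain ⟨⟨hlne, hlnd, hladj⟩, hldeg⟩ := hflat
  have hipl' : IsInducedPathList (G.induce S) l' := by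
    refine ⟨?_, ?_, ?_⟩
    · intro h
      apply hlne
      have := congrArg List.length h
      rw [hlen] at this
      exact List.length_eq_zero_iff.mp this
    · exact hlnd.pmap (fun a _ b _ h => congrArg Subtype.val h)
    · intro i j hi hj
      have : (G.induce S).Adj (l'.get ⟨i, hi⟩) (l'.get ⟨j, hj⟩) ↔
          G.Adj (l.get ⟨i, hlen ▸ hi⟩) (l.get ⟨j, hlen ▸ hj⟩) := by
        rw [← hget i hi, ← hget j hj]
        rfl
      rw [this, hladj]
  have hflat' : IsFlatPath (G.induce S) l' := by
    refine ⟨hipl', ?_⟩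
    intro i hi h0 h1
    have hi2 : i < l.length := hlen ▸ hi
    have hdeg := hldeg i hi2 h0 (hlen ▸ h1)
    set x : V := l.get ⟨i, hi2⟩ with hx
    have hxl : x ∈ l := List.get_mem l ⟨i, hi2⟩
    have himg : Subtype.val '' {u' : ↥S | (G.induce S).Adj (l'.get ⟨i, hi⟩) u'} =
        {w | G.Adj x w} := by
      ext w
      constructor
      · rintro ⟨y, hy, rfl⟩
        have : G.Adj ((l'.get ⟨i, hi⟩ : ↥S) : V) (y : V) := hy
        rwa [hget i hi] at this
      · intro hw
        have hwv : w ≠ v := by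
          rintro rfl
          exact hvAdj x hxl hw.symm
        refine ⟨⟨w, hwv⟩, ?_, rfl⟩
        show G.Adj ((l'.get ⟨i, hi⟩ : ↥S) : V) w
        rwa [hget i hi]
    calc ({u' : ↥S | (G.induce S).Adj (l'.get ⟨i, hi⟩) u'}).ncard
        = (Subtype.val '' {u' : ↥S | (G.induce S).Adj (l'.get ⟨i, hi⟩) u'}).ncard :=
          (Set.ncard_image_of_injective _ Subtype.val_injective).symm
      _ = ({w | G.Adj x w}).ncard := by rw [himg]
      _ = 2 := hdeg
  -- transfer the witness sets
  set W1' : Set ↥S := Subtype.val ⁻¹' W1 with hW1'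
  set W2' : Set ↥S := Subtype.val ⁻¹' W2 with hW2'
  have hint' : W1' ∩ W2' = {x' | x' ∈ l'} := by
    ext x'
    simp only [hW1', hW2', Set.mem_inter_iff, Set.mem_preimage, Set.mem_setOf_eq, hmem']
    have : (x' : V) ∈ W1 ∧ (x' : V) ∈ W2 ↔ (x' : V) ∈ W1 ∩ W2 := Iff.rfl
    rw [this, hint]
    rfl
  have huni' : W1' ∪ W2' = ClosedNbhd (G.induce S) {x' | x' ∈ l'} := by
    ext x'
    simp only [hW1', hW2', Set.mem_union, Set.mem_preimage]
    have h1 : (x' : V) ∈ W1 ∨ (x' : V) ∈ W2 ↔ (x' : V) ∈ W1 ∪ W2 := Iff.rfl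
    rw [h1, huni]
    constructor
    · rintro (hx | ⟨s, hs, hadj⟩)
      · exact Set.mem_union_left _ ((hmem' x').mpr hx)
      · refine Set.mem_union_right _ ⟨⟨s, hLS hs⟩, (hmem' _).mpr hs, hadj⟩
    · rintro (hx | ⟨s', hs', hadj⟩)
      · exact Set.mem_union_left _ ((hmem' x').mp hx)
      · exact Set.mem_union_right _ ⟨(s' : V), (hmem' s').mp hs', hadj⟩
  have hcW1' : ChordalSet (G.induce S) W1' := aux_chordal_preimage hc1
  have hcW2' : ChordalSet (G.induce S) W2' := aux_chordal_preimage hc2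
  obtain ⟨X1', X2', hX1, hX2, hcX1, hcX2, hXi, hXu⟩ :=
    hFPE l' hflat' W1' W2' hcW1' hcW2' hint' huni'
  -- project back
  set Y1 : Set V := Subtype.val '' X1' with hY1
  set Y2 : Set V := Subtype.val '' X2' with hY2
  have hWY1 : W1 ⊆ Y1 := by
    intro x hx
    exact ⟨⟨x, hW1S hx⟩, hX1 hx, rfl⟩
  have hWY2 : W2 ⊆ Y2 := by
    intro x hx
    exact ⟨⟨x, hW2S hx⟩, hX2 hx, rfl⟩
  have hcY1 : ChordalSet G Y1 := aux_chordal_down hcX1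
  have hcY2 : ChordalSet G Y2 := aux_chordal_down hcX2
  have hYint : Y1 ∩ Y2 = L := by
    rw [hY1, hY2, ← Set.image_inter Subtype.val_injective, hXi]
    ext x
    constructor
    · rintro ⟨y, hy, rfl⟩
      exact (hmem' y).mp hy
    · intro hx
      exact ⟨⟨x, hLS hx⟩, (hmem' _).mpr hx, rfl⟩
  have hYuni : Y1 ∪ Y2 = S := by
    rw [hY1, hY2, ← Set.image_union, hXu, Set.image_univ, Subtype.range_coe]
  -- locate u
  have hAdjvu : G.Adj v u := by
    have : u ∈ {w | G.Adj v w} := hNv ▸ Set.mem_union_right _ rfl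
    exact this
  have huv : u ≠ v := (G.ne_of_adj hAdjvu).symm
  have huS : u ∈ S := huv
  have huL : u ∉ L := by
    intro h
    exact hvP (Set.mem_union_right _ ⟨u, h, hAdjvu⟩)
  have : u ∈ Y1 ∪ Y2 := hYuni ▸ huS
  have hucases : u ∉ Y1 ∨ u ∉ Y2 := by
    by_contra h
    push_neg at h
    exact huL (hYint ▸ Set.mem_inter h.1 h.2)
  rcases hucases with hu1 | hu2
  · exact hnoext (aux_ext_swap (aux_cover_with_v hK hNv hWY2 hWY1 hcY2 hcY1
      (by rw [Set.inter_comm]; exact hYint) (by rw [Set.union_comm]; exact hYuni) hu1))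
  · exact hnoext (aux_cover_with_v hK hNv hWY1 hWY2 hcY1 hcY2 hYint hYuni hu2)
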